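/- Let c ≥ 1 be an integer and let w(n, J) be integers defined for all integers n ≥ 1 and 1 ≤ J ≤ c, satisfying: (i) w(1, J) ≤ J for all 1 ≤ J ≤ c; (ii) w(2, J) ≤ 2c + J for all 1 ≤ J ≤ c; and (iii) for every n ≥ 3 and 1 ≤ J ≤ c, at least one of the following holds: (a) there exist an integer k ≥ 2, integers n_1, …, n_k with 1 ≤ n_j ≤ n − 1 and n_1 + ⋯ + n_k = n + 1, and integers i_1, …, i_k with 1 ≤ i_j ≤ c, such that w(n, J) ≤ Σ_{j=1}^k w(n_j, i_j); or (b) there exist integers a, b ≥ 1 with a + b ≤ J such that w(n, J) ≤ a + w(n, b). Then for every n ≥ 2 and 1 ≤ J ≤ c one has w(n, J) ≤ n(4c − 1) − 3(2c − 1) + (J − 1); in particular w(n, J) ≤ n(4c − 1) − 5c + 2. -/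

import Mathlib

set_option maxHeartbeats 1600000 in
/-- Let `c ≥ 1` and let `w n J` be integers (for `n ≥ 1`, `1 ≤ J ≤ c`) with:
(i) `w 1 J ≤ J`; (ii) `w 2 J ≤ 2c + J`; and (iii) for `n ≥ 3`, `1 ≤ J ≤ c`,
either (a) there are `k ≥ 2`, degrees `n_1, …, n_k` with `1 ≤ n_j ≤ n - 1`
summing to `n + 1`, and steps `i_1, …, i_k` with `1 ≤ i_j ≤ c`, such that
`w n J ≤ Σ_j w (n_j) (i_j)`, or (b) there are `a, b ≥ 1` with `a + b ≤ J`
and `w n J ≤ a + w n b`.  Then for all `n ≥ 2`, `1 ≤ J ≤ c`: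
`w n J ≤ n (4c - 1) - 3 (2c - 1) + (J - 1)`; in particular
`w n J ≤ n (4c - 1) - 5c + 2`. -/
theorem stmt7 (c : ℤ) (hc : 1 ≤ c)
    (w : ℤ → ℤ → ℤ)
    (h1 : ∀ J : ℤ, 1 ≤ J → J ≤ c → w 1 J ≤ J)
    (h2 : ∀ J : ℤ, 1 ≤ J → J ≤ c → w 2 J ≤ 2 * c + J)
    (h3 : ∀ n J : ℤ, 3 ≤ n → 1 ≤ J → J ≤ c →
      (∃ (k : ℕ), 2 ≤ k ∧ ∃ (ns : Fin k → ℤ) (is : Fin k → ℤ),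
        (∀ j, 1 ≤ ns j ∧ ns j ≤ n - 1) ∧ (∑ j, ns j) = n + 1 ∧
        (∀ j, 1 ≤ is j ∧ is j ≤ c) ∧ w n J ≤ ∑ j, w (ns j) (is j)) ∨
      (∃ a b : ℤ, 1 ≤ a ∧ 1 ≤ b ∧ a + b ≤ J ∧ w n J ≤ a + w n b)) :
    ∀ n J : ℤ, 2 ≤ n → 1 ≤ J → J ≤ c →
      w n J ≤ n * (4 * c - 1) - 3 * (2 * c - 1) + (J - 1) ∧
        w n J ≤ n * (4 * c - 1) - 5 * c + 2 := by
  have key : ∀ m : ℕ, ∀ n : ℤ, 2 ≤ n → n ≤ (m : ℤ) + 2 → ∀ J : ℤ, 1 ≤ J → J ≤ c →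
      w n J ≤ n * (4 * c - 1) - (6 * c - 3) + (J - 1) := by
    intro m
    induction m with
    | zero =>
      intro n hn2 hn2' J hJ1 hJc
      have hn : n = 2 := by omega
      subst hn
      have := h2 J hJ1 hJc
      linarith
    | succ m ih =>
      intro n hn2 hnle J hJ1 hJc
      rcases lt_or_ge n ((m : ℤ) + 3) with h | h
      · exact ih n hn2 (by omega) J hJ1 hJc
      have hn3 : 3 ≤ n := by omega
      -- case (a) handler, valid for any J
      have caseA : ∀ J : ℤ, 1 ≤ J →
          (∃ (k : ℕ), 2 ≤ k ∧ ∃ (ns : Fin k → ℤ) (is : Fin k → ℤ),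
            (∀ j, 1 ≤ ns j ∧ ns j ≤ n - 1) ∧ (∑ j, ns j) = n + 1 ∧
            (∀ j, 1 ≤ is j ∧ is j ≤ c) ∧ w n J ≤ ∑ j, w (ns j) (is j)) →
          w n J ≤ n * (4 * c - 1) - (6 * c - 3) + (J - 1) := by
        rintro J hJ1 ⟨k, hk2, ns, is, hns, hsum, his, hw⟩
        have hterm : ∀ j, w (ns j) (is j) ≤
            (if ns j = 1 then c else ns j * (4 * c - 1) - (5 * c - 2)) := by
          intro j
          by_cases hj : ns j = 1
          · simp only [hj, if_true]
            have := h1 (is j) (his j).1 (his j).2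
            have := (his j).2
            linarith
          · simp only [hj, if_false]
            have h2j : 2 ≤ ns j := by have := (hns j).1; omega
            have hle : ns j ≤ (m : ℤ) + 2 := by have := (hns j).2; omega
            have := ih (ns j) h2j hle (is j) (his j).1 (his j).2
            have := (his j).2
            linarith
        have hsum2 : ∑ j, w (ns j) (is j) ≤
            ∑ j, (if ns j = 1 then c else ns j * (4 * c - 1) - (5 * c - 2)) :=
          Finset.sum_le_sum (fun j _ => hterm j)
        rw [Finset.sum_ite] at hsum2
        set S : Finset (Fin k) := Finset.univ.filter (fun j => ns j = 1) with hS
        set S' : Finset (Fin k) := Finset.univ.filter (fun j => ¬ ns j = 1) with hS'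
        have hcards : S.card + S'.card = k := by
          have := Finset.card_filter_add_card_filter_not
            (s := (Finset.univ : Finset (Fin k))) (p := fun j => ns j = 1)
          simpa [hS, hS'] using this
        have hSc : ∑ _j ∈ S, c = (S.card : ℤ) * c := by
          rw [Finset.sum_const, nsmul_eq_mul]
        -- sum over S of ns = card S
        have hSones : ∑ j ∈ S, ns j = (S.card : ℤ) := by
          rw [Finset.sum_congr rfl (fun j hj => (Finset.mem_filter.mp hj).2)]
          simp
          rfl
        have hsplit : ∑ j ∈ S, ns j + ∑ j ∈ S', ns j = n + 1 := by
          rw [hS, hS', Finset.sum_filter_add_sum_filter_not]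
          exact hsum
        set T : ℤ := ∑ j ∈ S', ns j with hT
        have hTlow : 2 * (S'.card : ℤ) ≤ T := by
          have : ∀ j ∈ S', 2 ≤ ns j := by
            intro j hj
            have h1j := (hns j).1
            have := (Finset.mem_filter.mp hj).2
            omega
          calc 2 * (S'.card : ℤ) = ∑ _j ∈ S', (2 : ℤ) := by
                rw [Finset.sum_const, nsmul_eq_mul]; ring
            _ ≤ T := Finset.sum_le_sum this
        have hThigh : T ≤ (S'.card : ℤ) * (n - 1) := by
          have : ∀ j ∈ S', ns j ≤ n - 1 := fun j _ => (hns j).2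
          calc T ≤ ∑ _j ∈ S', (n - 1 : ℤ) := Finset.sum_le_sum this
            _ = (S'.card : ℤ) * (n - 1) := by rw [Finset.sum_const, nsmul_eq_mul]
        have hS'sum : ∑ j ∈ S', (ns j * (4 * c - 1) - (5 * c - 2))
            = T * (4 * c - 1) - (S'.card : ℤ) * (5 * c - 2) := by
          rw [Finset.sum_sub_distrib, ← Finset.sum_mul, Finset.sum_const, nsmul_eq_mul]
        -- now pure arithmetic
        set K1 : ℤ := (S.card : ℤ) with hK1
        set M : ℤ := (S'.card : ℤ) with hM
        have hK1M : K1 + M = (k : ℤ) := by rw [hK1, hM]; exact_mod_cast hcards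
        have hk2' : (2 : ℤ) ≤ (k : ℤ) := by exact_mod_cast hk2
        have hK1nn : 0 ≤ K1 := Int.ofNat_nonneg _
        have hMnn : 0 ≤ M := Int.ofNat_nonneg _
        have hKT : K1 + T = n + 1 := by rw [← hSones]; exact hsplit
        clear_value T K1 M
        have harith : K1 * c + (T * (4 * c - 1) - M * (5 * c - 2))
            ≤ n * (4 * c - 1) - (6 * c - 3) := by
          have hgoal : K1 * (3 * c - 1) + (M - 2) * (5 * c - 2) ≥ 0 := by
            rcases show M = 0 ∨ M = 1 ∨ 2 ≤ M by omega with hM0 | hM1 | hM2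
            · -- M = 0 : T = 0, K1 = n + 1 ≥ 4
              have hT0 : T = 0 := by rw [hM0] at hTlow hThigh; omega
              have hK1n : K1 = n + 1 := by omega
              nlinarith [mul_nonneg (show (0:ℤ) ≤ K1 - 4 by omega) (show (0:ℤ) ≤ 3 * c - 1 by omega)]
            · -- M = 1 : K1 ≥ 2
              have hK12 : 2 ≤ K1 := by
                rw [hM1] at hThigh
                omega
              nlinarith [mul_nonneg (show (0:ℤ) ≤ K1 - 2 by omega) (show (0:ℤ) ≤ 3 * c - 1 by omega)]
            · nlinarith [mul_nonneg (show (0:ℤ) ≤ K1 by omega) (show (0:ℤ) ≤ 3 * c - 1 by omega),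
                mul_nonneg (show (0:ℤ) ≤ M - 2 by omega) (show (0:ℤ) ≤ 5 * c - 2 by omega)]
          nlinarith [hgoal, hKT]
        calc w n J ≤ ∑ j ∈ S, c + ∑ j ∈ S', (ns j * (4 * c - 1) - (5 * c - 2)) :=
              le_trans hw hsum2
          _ = K1 * c + (T * (4 * c - 1) - M * (5 * c - 2)) := by rw [hSc, hS'sum]
          _ ≤ n * (4 * c - 1) - (6 * c - 3) := harith
          _ ≤ n * (4 * c - 1) - (6 * c - 3) + (J - 1) := by linarith
      -- inner induction on J
      have inner : ∀ p : ℕ, ∀ J : ℤ, 1 ≤ J → J ≤ (p : ℤ) + 1 → J ≤ c →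
          w n J ≤ n * (4 * c - 1) - (6 * c - 3) + (J - 1) := by
        intro p
        induction p with
        | zero =>
          intro J hJ1 hJp hJc
          have hJ : J = 1 := by omega
          subst hJ
          rcases h3 n 1 hn3 le_rfl hJc with ha | ⟨a, b, ha1, hb1, hab, _⟩
          · exact caseA 1 le_rfl ha
          · omega
        | succ p ihp =>
          intro J hJ1 hJp hJc
          rcases h3 n J hn3 hJ1 hJc with ha | ⟨a, b, ha1, hb1, hab, hwb⟩
          · exact caseA J hJ1 ha
          · have hbJ : b ≤ (p : ℤ) + 1 := by omega
            have hbc : b ≤ c := by omega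
            have := ihp b hb1 hbJ hbc
            linarith
      exact inner J.toNat J hJ1 (by omega) hJc
  intro n J hn hJ1 hJc
  have h := key (n - 2).toNat n hn (by omega) J hJ1 hJc
  constructor
  · linarith
  · linarith
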